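/- Let a be an integer, let n ≥ 1 be an integer, and write d = gcd(a, n). Then the autocorrelation demerit factor of the Chu sequence Z_n^{(a)} satisfies ADF(Z_n^{(a)}) = (4d/n²) · Σ_{1 ≤ u ≤ n/(2d)} (sin(π a u²/n)/sin(π a u/n))² + (d−1)(2d−1)/(3d) − 2d·ε_{n/d}/n², where ε_{n/d} = 1 if n/d ≡ 2 (mod 4) and ε_{n/d} = 0 otherwise, and the sum runs over integers u with 1 ≤ u ≤ n/(2d). -/

import Mathlib

open Complex Real Filter Topology

noncomputable section

/-- Zero-extension of a (length `n`) sequence to all of `ℤ`: entries outside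
`{0, ..., n-1}` are set to `0`. -/
def seqExt (n : ℕ) (A : ℤ → ℂ) : ℤ → ℂ := fun j => if 0 ≤ j ∧ j < (n : ℤ) then A j else 0

/-- Aperiodic crosscorrelation of two sequences of length `n` at shift `u`:
`C_{A,B}(u) = ∑_{j ∈ ℤ} a_j * conj (b_{j+u})`.  Since the zero-extended entries
vanish outside `{0, ..., n-1}`, the sum over `ℤ` equals the sum over that range. -/
def corr (n : ℕ) (A B : ℤ → ℂ) (u : ℤ) : ℂ :=
  ∑ j ∈ Finset.Icc (0 : ℤ) ((n : ℤ) - 1), seqExt n A j * (starRingEnd ℂ) (seqExt n B (j + u))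

/-- Crosscorrelation demerit factor `CDF(A,B)`.  The correlations vanish for
`|u| ≥ n`, so the sum over all `u ∈ ℤ` equals the sum over `-(n-1) ≤ u ≤ n-1`. -/
def cdf (n : ℕ) (A B : ℤ → ℂ) : ℝ :=
  (∑ u ∈ Finset.Icc (-(n : ℤ) + 1) ((n : ℤ) - 1), ‖corr n A B u‖ ^ 2) /
    (‖corr n A A 0‖ * ‖corr n B B 0‖)

/-- Autocorrelation demerit factor `ADF(A)`. -/
def adf (n : ℕ) (A : ℤ → ℂ) : ℝ :=
  (∑ u ∈ Finset.Icc (-(n : ℤ) + 1) ((n : ℤ) - 1) \ {0}, ‖corr n A A u‖ ^ 2) /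
    ‖corr n A A 0‖ ^ 2

/-- Pursley-Sarwate criterion `PSC(A,B)`. -/
def psc (n : ℕ) (A B : ℤ → ℂ) : ℝ := Real.sqrt (adf n A * adf n B) + cdf n A B

/-- The Chu sequence of length `n` with parameter `a`: `z_j = exp(π i a j² / n)`. -/
def chu (n : ℕ) (a : ℤ) : ℤ → ℂ :=
  fun j => Complex.exp (Real.pi * Complex.I * (a : ℂ) * (j : ℂ) ^ 2 / (n : ℂ))

/-- Generalised Gauss sum `S_N(x, θ) = ∑_{j=1}^N exp(π i x j² + 2 π i θ j)`. -/
def gSum (N : ℕ) (x θ : ℝ) : ℂ :=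
  ∑ j ∈ Finset.Icc 1 N,
    Complex.exp (Real.pi * Complex.I * (x : ℂ) * (j : ℂ) ^ 2 +
      2 * Real.pi * Complex.I * (θ : ℂ) * (j : ℂ))

/-! ### Auxiliary lemmas -/

private lemma neg_one_zpow_sq (k : ℤ) : ((-1:ℝ)^k)^2 = 1 := by
  rw [← zpow_natCast ((-1:ℝ)^k) 2, ← zpow_mul, mul_comm, zpow_mul]; norm_num

private lemma sin_sq_add_int_mul_pi (x : ℝ) (k : ℤ) : Real.sin (x + k * π) ^ 2 = Real.sin x ^ 2 := by
  rw [Real.sin_add_int_mul_pi, mul_pow, neg_one_zpow_sq, one_mul]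

private lemma abs_sq_exp_sub_one (t : ℝ) :
    ‖Complex.exp (t * Complex.I) - 1‖ ^ 2 = 4 * Real.sin (t / 2) ^ 2 := by
  rw [Complex.exp_mul_I]
  have h1 : (Complex.cos t + Complex.sin t * Complex.I - 1)
      = Complex.ofReal (Real.cos t - 1) + Complex.ofReal (Real.sin t) * Complex.I := by
    push_cast [Complex.ofReal_cos, Complex.ofReal_sin]
    ring
  rw [h1, Complex.sq_norm, Complex.normSq_add_mul_I]
  have h2 : Real.cos t = 1 - 2 * Real.sin (t/2) ^ 2 := by
    have h := Real.cos_two_mul (t/2)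
    rw [show 2*(t/2) = t by ring] at h
    nlinarith [Real.sin_sq_add_cos_sq (t/2)]
  have h3 : Real.sin t ^ 2 = 1 - Real.cos t ^ 2 := by
    nlinarith [Real.sin_sq_add_cos_sq t]
  rw [h3, h2]; ring

private lemma geom_abs_sq (θ : ℝ) (N : ℕ) (h : Real.sin (θ/2) ≠ 0) :
    ‖∑ j ∈ Finset.range N, Complex.exp (θ*Complex.I)^j‖ ^ 2
      = Real.sin (N*θ/2)^2 / Real.sin (θ/2)^2 := by
  have hz : Complex.exp (θ*Complex.I) ≠ 1 := by
    intro hz1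
    have := abs_sq_exp_sub_one θ
    rw [hz1] at this
    simp at this
    exact h (by simpa using this)
  rw [geom_sum_eq hz]
  have hp : Complex.exp (θ*Complex.I) ^ N = Complex.exp ((((N:ℝ)*θ : ℝ) : ℂ)*Complex.I) := by
    rw [← Complex.exp_nat_mul]; push_cast; ring_nf
  rw [norm_div, div_pow, hp, abs_sq_exp_sub_one, abs_sq_exp_sub_one]
  field_simp

private lemma corr_nat (n : ℕ) (A B : ℤ → ℂ) (u : ℤ) :
    corr n A B u = ∑ k ∈ Finset.range n, seqExt n A k * (starRingEnd ℂ) (seqExt n B (k + u)) := by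
  rw [corr]
  refine Finset.sum_nbij' (fun j => j.toNat) (fun k => (k : ℤ)) ?_ ?_ ?_ ?_ ?_
  · intro j hj; simp only [Finset.mem_Icc] at hj; simp only [Finset.mem_range]; omega
  · intro k hk; simp only [Finset.mem_range] at hk; simp only [Finset.mem_Icc]; omega
  · intro j hj; simp only [Finset.mem_Icc] at hj
    show ((j.toNat : ℤ)) = j; omega
  · intro k hk; simp
  · intro j hj; simp only [Finset.mem_Icc] at hj
    rw [Int.toNat_of_nonneg hj.1]

private lemma corr_chu (a : ℤ) (n u : ℕ) (hn : 1 ≤ n) (hu : u ≤ n) :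
    corr n (chu n a) (chu n a) u =
      Complex.exp ((-(π*a*u^2/n) : ℝ) * Complex.I) *
        ∑ j ∈ Finset.range (n - u), Complex.exp (((-(2*π*a*u/n)) : ℝ) * Complex.I)^j := by
  have hn0 : (n:ℂ) ≠ 0 := Nat.cast_ne_zero.mpr (by omega)
  rw [corr_nat]
  rw [← Finset.sum_subset (Finset.range_subset_range.2 (Nat.sub_le n u))
      (by
        intro k hk hk2
        simp only [Finset.mem_range] at hk hk2
        have : ¬ ((k:ℤ) + u < n) := by omega
        simp [seqExt, this])]
  rw [Finset.mul_sum]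
  refine Finset.sum_congr rfl ?_
  intro k hk
  simp only [Finset.mem_range] at hk
  have h1 : (0:ℤ) ≤ (k:ℤ) ∧ (k:ℤ) < n := by omega
  have h2 : (0:ℤ) ≤ (k:ℤ) + u ∧ (k:ℤ) + u < n := by omega
  rw [seqExt, seqExt]
  simp only [h1, h2, and_self, if_true, if_pos]
  rw [chu, chu, ← Complex.exp_conj]
  rw [← Complex.exp_add, ← Complex.exp_nat_mul, ← Complex.exp_add]
  congr 1
  have : (starRingEnd ℂ) (↑π * Complex.I * ↑a * (↑((k:ℤ) + ↑u):ℂ) ^ 2 / ↑n)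
      = -(↑π * Complex.I * ↑a * (↑((k:ℤ) + ↑u):ℂ) ^ 2 / ↑n) := by
    simp [map_div₀, map_mul, Complex.conj_I]
    push_cast
    ring
  rw [this]
  push_cast
  field_simp
  ring

private lemma seqExt_eq_zero {n : ℕ} {A : ℤ → ℂ} {j : ℤ} (h : ¬ (0 ≤ j ∧ j < (n:ℤ))) :
    seqExt n A j = 0 := by simp [seqExt, h]

private lemma corr_neg (n : ℕ) (A : ℤ → ℂ) (u : ℤ) :
    corr n A A (-u) = (starRingEnd ℂ) (corr n A A u) := by
  classical
  set g : ℤ → ℂ := fun k => seqExt n A k * (starRingEnd ℂ) (seqExt n A (k - u)) with hg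
  have h1 : corr n A A (-u) = ∑ k ∈ Finset.Icc (0:ℤ) ((n:ℤ)-1), g k := by
    refine Finset.sum_congr rfl fun j _ => ?_
    simp only [hg, sub_eq_add_neg]
  have h2 : (starRingEnd ℂ) (corr n A A u) = ∑ k ∈ Finset.Icc u ((n:ℤ)-1+u), g k := by
    rw [corr, map_sum]
    rw [show Finset.Icc u ((n:ℤ)-1+u) = (Finset.Icc (0:ℤ) ((n:ℤ)-1)).map
        (addRightEmbedding u) by rw [Finset.map_add_right_Icc]; ring_nf]
    rw [Finset.sum_map]
    refine Finset.sum_congr rfl fun j _ => ?_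
    show (starRingEnd ℂ) (seqExt n A j * (starRingEnd ℂ) (seqExt n A (j + u))) = g (j + u)
    rw [map_mul, Complex.conj_conj, hg]
    simp only [add_sub_cancel_right]
    ring
  rw [h1, h2]
  have hzero1 : ∀ k ∈ Finset.Icc (min 0 u) ((n:ℤ)-1 + max 0 u),
      k ∉ Finset.Icc (0:ℤ) ((n:ℤ)-1) → g k = 0 := by
    intro k _ hk
    simp only [Finset.mem_Icc] at hk
    rw [hg]; simp only
    rw [seqExt_eq_zero (by omega)]
    simp
  have hzero2 : ∀ k ∈ Finset.Icc (min 0 u) ((n:ℤ)-1 + max 0 u),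
      k ∉ Finset.Icc u ((n:ℤ)-1+u) → g k = 0 := by
    intro k _ hk
    simp only [Finset.mem_Icc] at hk
    rw [hg]; simp only
    rw [seqExt_eq_zero (j := k - u) (by omega)]
    simp
  rw [Finset.sum_subset (Finset.Icc_subset_Icc (by omega) (by omega)) hzero1,
      Finset.sum_subset (Finset.Icc_subset_Icc (by omega) (by omega)) hzero2]

private lemma corr_chu_zero (a : ℤ) (n : ℕ) (hn : 1 ≤ n) :
    corr n (chu n a) (chu n a) 0 = (n : ℂ) := by
  have := corr_chu a n 0 hn (by omega)
  rw [show ((0:ℕ):ℤ) = 0 by rfl] at this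
  rw [this]
  norm_num

private lemma sum_sq_formula (d : ℕ) :
    ∑ t ∈ Finset.range d, (t:ℝ)^2 = d*((d:ℝ)-1)*(2*d-1)/6 := by
  induction d with
  | zero => simp
  | succ k ih => rw [Finset.sum_range_succ, ih]; push_cast; ring

/-- the numerator sum is twice the sum over positive shifts -/
private lemma sum_shifts (n : ℕ) (hn : 1 ≤ n) (A : ℤ → ℂ) :
    ∑ u ∈ Finset.Icc (-(n : ℤ) + 1) ((n : ℤ) - 1) \ {0}, ‖corr n A A u‖ ^ 2
      = 2 * ∑ u ∈ Finset.Icc 1 (n-1), ‖corr n A A (u:ℕ)‖ ^ 2 := by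
  classical
  have hsplit : Finset.Icc (-(n : ℤ) + 1) ((n : ℤ) - 1) \ {0}
      = Finset.Icc (-(n:ℤ)+1) (-1) ∪ Finset.Icc 1 ((n:ℤ)-1) := by
    ext x; simp only [Finset.mem_sdiff, Finset.mem_Icc, Finset.mem_union, Finset.mem_singleton]
    omega
  have hdisj : Disjoint (Finset.Icc (-(n:ℤ)+1) (-1)) (Finset.Icc 1 ((n:ℤ)-1)) := by
    rw [Finset.disjoint_left]
    intro x hx hx2
    simp only [Finset.mem_Icc] at hx hx2
    omega
  rw [hsplit, Finset.sum_union hdisj]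
  have hneg : ∑ u ∈ Finset.Icc (-(n:ℤ)+1) (-1), ‖corr n A A u‖ ^ 2
      = ∑ u ∈ Finset.Icc (1:ℤ) ((n:ℤ)-1), ‖corr n A A u‖ ^ 2 := by
    refine Finset.sum_nbij' (fun u => -u) (fun u => -u) ?_ ?_ ?_ ?_ ?_
    · intro u hu; simp only [Finset.mem_Icc] at hu ⊢; omega
    · intro u hu; simp only [Finset.mem_Icc] at hu ⊢; omega
    · intro u _; simp
    · intro u _; simp
    · intro u hu
      have : corr n A A u = corr n A A (-(-u)) := by rw [neg_neg]
      rw [this, corr_neg]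
      rw [Complex.norm_conj]
  have hnat : ∑ u ∈ Finset.Icc (1:ℤ) ((n:ℤ)-1), ‖corr n A A u‖ ^ 2
      = ∑ u ∈ Finset.Icc 1 (n-1), ‖corr n A A (u:ℕ)‖ ^ 2 := by
    refine Finset.sum_nbij' (fun u => u.toNat) (fun u => (u:ℤ)) ?_ ?_ ?_ ?_ ?_
    · intro u hu; simp only [Finset.mem_Icc] at hu ⊢; omega
    · intro u hu; simp only [Finset.mem_Icc] at hu ⊢; omega
    · intro u hu; simp only [Finset.mem_Icc] at hu; show ((u.toNat : ℤ)) = u; omega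
    · intro u _; simp
    · intro u hu; simp only [Finset.mem_Icc] at hu
      rw [Int.toNat_of_nonneg (by omega)]
  rw [hneg, hnat]
  ring

private lemma keyR (a a' : ℤ) (n d m : ℕ) (ha : a = (d:ℤ) * a') (hnm : n = d * m) :
    (a:ℝ) * m = a' * n := by
  have : a * (m:ℤ) = a' * n := by rw [ha, hnm]; push_cast; ring
  exact_mod_cast this

private lemma sin_ne_zero_of_not_dvd (a a' : ℤ) (n d m : ℕ) (hn : 1 ≤ n)
    (ha : a = (d:ℤ) * a') (hnm : n = d * m) (hco : Int.gcd a' (m:ℤ) = 1)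
    (u : ℕ) (hnd : ¬ m ∣ u) : Real.sin (π*a*u/n) ≠ 0 := by
  intro h
  rw [Real.sin_eq_zero_iff] at h
  obtain ⟨k, hk⟩ := h
  have hn0 : (n:ℝ) ≠ 0 := Nat.cast_ne_zero.mpr (by omega)
  have hk2 : (k:ℝ) * n = a * u := by
    field_simp at hk
    nlinarith [Real.pi_pos, hk]
  have hkZ : k * (n:ℤ) = a * u := by exact_mod_cast hk2
  have hdvd : (n:ℤ) ∣ a * u := Dvd.intro k (by linarith [hkZ])
  have hd0 : (d:ℤ) ≠ 0 := by
    refine Int.natCast_ne_zero.mpr ?_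
    rintro rfl
    simp at hnm
    omega
  rw [hnm, ha] at hdvd
  push_cast at hdvd
  have hdvd2 : (m:ℤ) ∣ a' * u := by
    rcases hdvd with ⟨c, hc⟩
    refine ⟨c, ?_⟩
    have : (d:ℤ) * (a' * u) = d * (m * c) := by linarith [hc]
    exact mul_left_cancel₀ hd0 this
  have hdvd3 : (m:ℤ) ∣ (u:ℤ) := by
    have hco2 : Int.gcd (m:ℤ) a' = 1 := by rw [Int.gcd_comm]; exact hco
    exact Int.dvd_of_dvd_mul_left_of_gcd_one (by rwa [mul_comm] at hdvd2) hco2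
  exact hnd (Int.natCast_dvd_natCast.mp hdvd3)


private lemma abs_corr_nondiv (a a' : ℤ) (n d m : ℕ) (hn : 1 ≤ n)
    (ha : a = (d:ℤ) * a') (hnm : n = d * m) (hco : Int.gcd a' (m:ℤ) = 1)
    (u : ℕ) (hu1 : 1 ≤ u) (hu2 : u < n) (hnd : ¬ m ∣ u) :
    ‖corr n (chu n a) (chu n a) (u:ℕ)‖ ^ 2
      = Real.sin (π*a*(u:ℝ)^2/n)^2 / Real.sin (π*a*(u:ℝ)/n)^2 := by
  have hsin := sin_ne_zero_of_not_dvd a a' n d m hn ha hnm hco u hnd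
  have hn0 : (n:ℝ) ≠ 0 := Nat.cast_ne_zero.mpr (by omega)
  rw [corr_chu a n u hn (le_of_lt hu2), norm_mul, mul_pow, Complex.norm_exp_ofReal_mul_I,
    one_pow, one_mul]
  set θ : ℝ := -(2*π*a*u/n) with hθ
  have hhalf : θ/2 = -(π*a*u/n) := by rw [hθ]; ring
  have hs : Real.sin (θ/2) ≠ 0 := by
    rw [hhalf, Real.sin_neg]
    simpa using hsin
  rw [geom_abs_sq θ (n-u) hs, hhalf, Real.sin_neg, neg_sq]
  congr 1
  have hid : ((n-u:ℕ):ℝ) * θ/2 = π*a*u^2/n + (-(a*(u:ℤ)):ℤ)*π := by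
    have hcast : ((n-u:ℕ):ℝ) = (n:ℝ) - u := by
      push_cast [Nat.cast_sub (le_of_lt hu2)]; ring
    rw [hcast, hθ]
    push_cast
    field_simp
    ring
  rw [hid, sin_sq_add_int_mul_pi]

private lemma abs_corr_div (a a' : ℤ) (n d m : ℕ) (hn : 1 ≤ n)
    (ha : a = (d:ℤ) * a') (hnm : n = d * m)
    (u : ℕ) (hu : u ≤ n) (hdvd : m ∣ u) :
    ‖corr n (chu n a) (chu n a) (u:ℕ)‖ ^ 2 = ((n:ℝ) - (u:ℝ))^2 := by
  obtain ⟨c, rfl⟩ := hdvd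
  have hn0 : (n:ℝ) ≠ 0 := Nat.cast_ne_zero.mpr (by omega)
  have key := keyR a a' n d m ha hnm
  rw [corr_chu a n (m*c) hn hu]
  have harg : ((-(2*π*a*(m*c:ℕ)/n)) : ℝ) = ((-(a'*c) : ℤ) : ℝ) * (2*π) := by
    push_cast
    field_simp
    linear_combination (-(c:ℝ)) * key
  have hone : Complex.exp (((-(2*π*a*(m*c:ℕ)/n)) : ℝ) * Complex.I) = 1 := by
    rw [harg]
    have h2 := Complex.exp_int_mul_two_pi_mul_I (-(a'*c))
    rw [← h2]
    push_cast
    ring_nf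
  rw [hone]
  simp only [one_pow, Finset.sum_const, Finset.card_range, nsmul_eq_mul, mul_one]
  rw [norm_mul, Complex.norm_exp_ofReal_mul_I, one_mul]
  rw [Complex.norm_natCast]
  rw [Nat.cast_sub hu]

-- Fper
private lemma Fper (a a' : ℤ) (n d m : ℕ) (hn : 1 ≤ n)
    (ha : a = (d:ℤ) * a') (hnm : n = d * m) (q r : ℕ) :
    Real.sin (π*a*((q*m+r : ℕ):ℝ)^2/n)^2 / Real.sin (π*a*((q*m+r : ℕ):ℝ)/n)^2
      = Real.sin (π*a*(r:ℝ)^2/n)^2 / Real.sin (π*a*(r:ℝ)/n)^2 := by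
  have hn0 : (n:ℝ) ≠ 0 := Nat.cast_ne_zero.mpr (by omega)
  have key := keyR a a' n d m ha hnm
  have h1 : π*a*((q*m+r : ℕ):ℝ)/n = π*a*(r:ℝ)/n + ((a'*q : ℤ):ℝ)*π := by
    push_cast
    field_simp
    linear_combination (q:ℝ) * key
  have h2 : π*a*((q*m+r : ℕ):ℝ)^2/n = π*a*(r:ℝ)^2/n + ((a'*q*(q*m+2*r) : ℤ):ℝ)*π := by
    push_cast
    field_simp
    linear_combination ((q:ℝ)*((q:ℝ)*m+2*r)) * key
  rw [h1, h2, sin_sq_add_int_mul_pi, sin_sq_add_int_mul_pi]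

-- Fsym
private lemma Fsym (a a' : ℤ) (n d m : ℕ) (hn : 1 ≤ n)
    (ha : a = (d:ℤ) * a') (hnm : n = d * m) (r : ℕ) (hr : r ≤ m) :
    Real.sin (π*a*((m-r : ℕ):ℝ)^2/n)^2 / Real.sin (π*a*((m-r : ℕ):ℝ)/n)^2
      = Real.sin (π*a*(r:ℝ)^2/n)^2 / Real.sin (π*a*(r:ℝ)/n)^2 := by
  have hn0 : (n:ℝ) ≠ 0 := Nat.cast_ne_zero.mpr (by omega)
  have key := keyR a a' n d m ha hnm
  have h1 : π*a*((m-r : ℕ):ℝ)/n = -(π*a*(r:ℝ)/n) + ((a' : ℤ):ℝ)*π := by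
    push_cast [Nat.cast_sub hr]
    field_simp
    linear_combination key
  have h2 : π*a*((m-r : ℕ):ℝ)^2/n = π*a*(r:ℝ)^2/n + ((a'*m - 2*a'*r : ℤ):ℝ)*π := by
    push_cast [Nat.cast_sub hr]
    field_simp
    linear_combination ((m:ℝ) - 2*(r:ℝ)) * key
  rw [h1, h2, sin_sq_add_int_mul_pi, sin_sq_add_int_mul_pi, Real.sin_neg, neg_sq]

private lemma Fhalf (a a' : ℤ) (n d m : ℕ) (hn : 1 ≤ n)
    (ha : a = (d:ℤ) * a') (hnm : n = d * m) (hco : Int.gcd a' (m:ℤ) = 1)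
    (h : ℕ) (hh1 : 1 ≤ h) (hm2 : m = 2*h) :
    Real.sin (π*a*(h:ℝ)^2/n)^2 / Real.sin (π*a*(h:ℝ)/n)^2
      = if m % 4 = 2 then 1 else 0 := by
  have hn0 : (n:ℝ) ≠ 0 := Nat.cast_ne_zero.mpr (by omega)
  have key := keyR a a' n d m ha hnm
  have key2 : (a:ℝ) * (2*(h:ℝ)) = a' * n := by
    rw [← key, hm2]; push_cast; ring
  -- a' is odd
  have ha'odd : Odd a' := by
    rcases Int.even_or_odd a' with he | ho
    · exfalso
      have h2a : 2 ∣ a'.natAbs := (Int.natAbs_even.mpr he).two_dvd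
      have h2m : 2 ∣ m := ⟨h, hm2⟩
      have : 2 ∣ Int.gcd a' (m:ℤ) := Nat.dvd_gcd h2a (by simpa using h2m)
      omega
    · exact ho
  obtain ⟨t, ht⟩ := ha'odd
  have hta : (a':ℝ) = 2*t+1 := by exact_mod_cast congrArg (Int.cast : ℤ → ℝ) ht
  -- denominator = ±1
  have h1 : π*a*(h:ℝ)/n = π/2 + ((t:ℤ):ℝ)*π := by
    push_cast
    linear_combination (norm := (field_simp; ring)) (π/(2*(n:ℝ))) * key2 + (π/2) * hta
  have hden : Real.sin (π*a*(h:ℝ)/n)^2 = 1 := by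
    rw [h1, show π/2 + ((t:ℤ):ℝ)*π = π/2 + (t:ℤ)*π from rfl, sin_sq_add_int_mul_pi,
      Real.sin_pi_div_two, one_pow]
  rcases Nat.even_or_odd h with ⟨s, hs⟩ | ⟨s, hs⟩
  · -- h even : m % 4 = 0, numerator = 0
    have hm4 : ¬ (m % 4 = 2) := by omega
    rw [if_neg hm4]
    have hsr : (h:ℝ) = 2*(s:ℝ) := by push_cast [hs]; ring
    have h2 : π*a*(h:ℝ)^2/n = ((a'*s : ℤ):ℝ)*π := by
      push_cast
      linear_combination (norm := (field_simp; ring)) (π*(s:ℝ)/(n:ℝ)) * key2 + (π*(a:ℝ)*(h:ℝ)/(n:ℝ)) * hsr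
    rw [h2, Real.sin_int_mul_pi]
    norm_num
  · -- h odd : m % 4 = 2, numerator = 1
    have hm4 : m % 4 = 2 := by omega
    rw [if_pos hm4]
    set w : ℤ := 2*t*s + t + s with hwdef
    have hw : (a':ℝ) * h = 2*(w:ℝ) + 1 := by
      rw [hta, hwdef]
      push_cast [hs]
      ring
    have h2 : π*a*(h:ℝ)^2/n = π/2 + ((w:ℤ):ℝ)*π := by
      linear_combination (norm := (field_simp; ring)) (π*(h:ℝ)/(2*(n:ℝ))) * key2 + (π/2) * hw
    rw [h2, show π/2 + ((w:ℤ):ℝ)*π = π/2 + (w:ℤ)*π from rfl, sin_sq_add_int_mul_pi,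
      Real.sin_pi_div_two, one_pow, hden]
    norm_num


/-- exact formula for the autocorrelation demerit factor of a Chu sequence. -/
theorem adf_chu_formula (a : ℤ) (n : ℕ) (hn : 1 ≤ n) (d : ℕ) (hd : d = Int.gcd a n) :
    adf n (chu n a) =
      4 * d / (n : ℝ) ^ 2 *
        ∑ u ∈ Finset.Icc 1 (n / (2 * d)),
          (Real.sin (Real.pi * a * u ^ 2 / n) / Real.sin (Real.pi * a * u / n)) ^ 2 +
      ((d : ℝ) - 1) * (2 * d - 1) / (3 * d) -
      2 * d * (if n / d % 4 = 2 then (1 : ℝ) else 0) / (n : ℝ) ^ 2 := by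
  classical
  have hdpos : 0 < d := by
    rw [hd]
    exact Int.gcd_pos_of_ne_zero_right a (Int.natCast_ne_zero.mpr (by omega))
  have hdvd_n : d ∣ n := by
    have : (d:ℤ) ∣ (n:ℤ) := hd ▸ Int.gcd_dvd_right a (n:ℤ)
    exact_mod_cast this
  set m := n / d with hmdef
  have hnm : n = d * m := (Nat.mul_div_cancel' hdvd_n).symm
  have hmpos : 0 < m := by
    rcases Nat.eq_zero_or_pos m with h0 | h; · rw [h0, Nat.mul_zero] at hnm; omega
    exact h
  have hdvd_a : (d:ℤ) ∣ a := hd ▸ Int.gcd_dvd_left a (n:ℤ)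
  set a' := a / (d:ℤ) with ha'def
  have ha : a = (d:ℤ) * a' := (Int.mul_ediv_cancel' hdvd_a).symm
  have hco : Int.gcd a' (m:ℤ) = 1 := by
    have hposg : 0 < Int.gcd a (n:ℤ) := by rw [← hd]; exact hdpos
    have h2 := Int.gcd_div_gcd_div_gcd (i := a) (j := (n:ℤ)) hposg
    rw [← hd] at h2
    have hcast : ((n:ℤ)) / (d:ℤ) = (m:ℤ) := by
      rw [hnm]; push_cast
      exact Int.mul_ediv_cancel_left _ (Int.natCast_ne_zero.mpr (by omega))
    rwa [hcast] at h2
  have hn0 : (n:ℝ) ≠ 0 := Nat.cast_ne_zero.mpr (by omega)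
  have hd0 : (d:ℝ) ≠ 0 := Nat.cast_ne_zero.mpr (by omega)
  have hm0 : (m:ℝ) ≠ 0 := Nat.cast_ne_zero.mpr (by omega)
  have hnR : (n:ℝ) = (d:ℝ) * m := by exact_mod_cast congrArg (Nat.cast : ℕ → ℝ) hnm
  clear_value m a'
  set F : ℕ → ℝ := fun u => Real.sin (π*a*(u:ℝ)^2/n)^2 / Real.sin (π*a*(u:ℝ)/n)^2 with hF
  -- rewrite the target ranges
  have hrange1 : n / (2 * d) = m / 2 := by
    rw [hnm, mul_comm 2 d, Nat.mul_div_mul_left m 2 hdpos]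
  rw [hrange1]
  rw [adf, corr_chu_zero a n hn, Complex.norm_natCast, sum_shifts n hn]
  set E : ℝ := if m % 4 = 2 then (1:ℝ) else 0 with hE
  set Sig : ℝ := ∑ u ∈ Finset.Icc 1 (m / 2), F u with hSig
  have hSig' : ∑ u ∈ Finset.Icc 1 (m / 2),
      (Real.sin (π * a * u ^ 2 / n) / Real.sin (π * a * u / n)) ^ 2 = Sig := by
    rw [hSig]
    exact Finset.sum_congr rfl fun u _ => by rw [hF]; beta_reduce; rw [div_pow]
  rw [hSig']
  -- multiples part
  have hMult : ∑ u ∈ (Finset.Icc 1 (n-1)).filter (fun u => m ∣ u),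
      ‖corr n (chu n a) (chu n a) (u:ℕ)‖ ^ 2
      = (m:ℝ)^2 * (d*((d:ℝ)-1)*(2*d-1)/6) := by
    have step1 : ∑ u ∈ (Finset.Icc 1 (n-1)).filter (fun u => m ∣ u),
        ‖corr n (chu n a) (chu n a) (u:ℕ)‖ ^ 2
        = ∑ t ∈ Finset.Icc 1 (d-1), ((t*m : ℕ):ℝ)^2 := by
      refine Finset.sum_nbij' (fun u => d - u/m) (fun t => (d-t)*m) ?_ ?_ ?_ ?_ ?_
      · intro u hu
        simp only [Finset.mem_filter, Finset.mem_Icc] at hu ⊢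
        obtain ⟨⟨h1, h2⟩, c, rfl⟩ := hu
        rw [Nat.mul_div_cancel_left c hmpos]
        have hc1 : 1 ≤ c := Nat.pos_of_ne_zero (by rintro rfl; simp at h1)
        have hcd : c < d := by
          by_contra hcd; push_neg at hcd
          have h3 : d*m ≤ c*m := Nat.mul_le_mul_right m hcd
          rw [mul_comm c m] at h3
          omega
        omega
      · intro t ht
        simp only [Finset.mem_Icc] at ht
        simp only [Finset.mem_filter, Finset.mem_Icc]
        obtain ⟨h1, h2⟩ := ht
        have e1 : (d-t)*m + t*m = d*m := by rw [← Nat.add_mul]; congr 1; omega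
        have e2 : 1*1 ≤ (d-t)*m := Nat.mul_le_mul (by omega) hmpos
        have e3 : 1*m ≤ t*m := Nat.mul_le_mul_right m h1
        rw [one_mul] at e2 e3
        exact ⟨⟨by omega, by omega⟩, ⟨d-t, by ring⟩⟩
      · intro u hu
        simp only [Finset.mem_filter, Finset.mem_Icc] at hu
        obtain ⟨⟨h1, h2⟩, c, rfl⟩ := hu
        beta_reduce
        rw [Nat.mul_div_cancel_left c hmpos]
        have hc1 : 1 ≤ c := Nat.pos_of_ne_zero (by rintro rfl; simp at h1)
        have hcd : c < d := by
          by_contra hcd; push_neg at hcd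
          have h3 : d*m ≤ c*m := Nat.mul_le_mul_right m hcd
          rw [mul_comm c m] at h3
          omega
        rw [show d - (d - c) = c from by omega, mul_comm]
      · intro t ht
        simp only [Finset.mem_Icc] at ht
        beta_reduce
        rw [Nat.mul_div_cancel _ hmpos]
        omega
      · intro u hu
        simp only [Finset.mem_filter, Finset.mem_Icc] at hu
        obtain ⟨⟨h1, h2⟩, hdvd⟩ := hu
        beta_reduce
        rw [abs_corr_div a a' n d m hn ha hnm u (by omega) hdvd]
        have hcd : u / m < d := by
          by_contra hcd
          push_neg at hcd
          have h3 : d * m ≤ u/m * m := Nat.mul_le_mul_right m hcd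
          have h4 : u/m*m ≤ u := Nat.div_mul_le_self u m
          omega
        have heq : (d - u/m) * m = n - u := by
          obtain ⟨c, rfl⟩ := hdvd
          rw [Nat.mul_div_cancel_left c hmpos, hnm, Nat.sub_mul, mul_comm m c]
        rw [heq, Nat.cast_sub (by omega)]
    rw [step1]
    have step2 : ∑ t ∈ Finset.Icc 1 (d-1), ((t*m : ℕ):ℝ)^2
        = (m:ℝ)^2 * ∑ t ∈ Finset.Icc 1 (d-1), (t:ℝ)^2 := by
      rw [Finset.mul_sum]
      exact Finset.sum_congr rfl fun t _ => by push_cast; ring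
    have step3 : ∑ t ∈ Finset.Icc 1 (d-1), (t:ℝ)^2 = ∑ t ∈ Finset.range d, (t:ℝ)^2 := by
      rw [show Finset.range d = insert 0 (Finset.Icc 1 (d-1)) by
        ext x; simp only [Finset.mem_range, Finset.mem_insert, Finset.mem_Icc]; omega]
      rw [Finset.sum_insert (by simp)]
      norm_num
    rw [step2, step3, sum_sq_formula]
  -- nonmultiples part
  have hNon : ∑ u ∈ (Finset.Icc 1 (n-1)).filter (fun u => ¬ m ∣ u),
      ‖corr n (chu n a) (chu n a) (u:ℕ)‖ ^ 2
      = (d:ℝ) * ∑ r ∈ Finset.Icc 1 (m-1), F r := by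
    have step1 : ∑ u ∈ (Finset.Icc 1 (n-1)).filter (fun u => ¬ m ∣ u),
        ‖corr n (chu n a) (chu n a) (u:ℕ)‖ ^ 2
        = ∑ p ∈ (Finset.range d) ×ˢ (Finset.Icc 1 (m-1)), F (p.1 * m + p.2) := by
      refine Finset.sum_nbij' (fun u => (u/m, u%m)) (fun p => p.1*m + p.2) ?_ ?_ ?_ ?_ ?_
      · intro u hu
        simp only [Finset.mem_filter, Finset.mem_Icc] at hu
        obtain ⟨⟨h1, h2⟩, hnd⟩ := hu
        simp only [Finset.mem_product, Finset.mem_range, Finset.mem_Icc]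
        have hmod : u % m ≠ 0 := fun h0 => hnd (Nat.dvd_of_mod_eq_zero h0)
        refine ⟨?_, by omega, by have := Nat.mod_lt u hmpos; omega⟩
        rw [Nat.div_lt_iff_lt_mul hmpos]
        have hmn : n = m * d := by rw [hnm, mul_comm]
        omega
      · intro p hp
        simp only [Finset.mem_product, Finset.mem_range, Finset.mem_Icc] at hp
        obtain ⟨h1, h2, h3⟩ := hp
        simp only [Finset.mem_filter, Finset.mem_Icc]
        have hb : (p.1+1)*m ≤ d*m := Nat.mul_le_mul_right m (by omega)
        have hb2 : (p.1+1)*m = p.1*m + m := by ring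
        have h7 : d*m = n := hnm.symm
        refine ⟨⟨by omega, by omega⟩, ?_⟩
        intro hdvd
        have hmm : (p.1*m + p.2) % m = p.2 % m := by
          rw [add_comm]
          exact Nat.add_mul_mod_self_right p.2 p.1 m
        have hmm2 : p.2 % m = p.2 := Nat.mod_eq_of_lt (by omega)
        have hz : (p.1*m + p.2) % m = 0 := Nat.mod_eq_zero_of_dvd hdvd
        omega
      · intro u hu
        show u/m*m + u%m = u
        rw [mul_comm]
        exact Nat.div_add_mod u m
      · intro p hp
        simp only [Finset.mem_product, Finset.mem_range, Finset.mem_Icc] at hp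
        obtain ⟨h1, h2, h3⟩ := hp
        have hdiv : (p.1*m + p.2)/m = p.1 := by
          rw [add_comm, Nat.add_mul_div_right _ _ hmpos, Nat.div_eq_of_lt (by omega)]
          omega
        have hmod : (p.1*m + p.2) % m = p.2 := by
          rw [add_comm, Nat.add_mul_mod_self_right, Nat.mod_eq_of_lt (by omega)]
        beta_reduce
        exact Prod.ext hdiv hmod
      · intro u hu
        simp only [Finset.mem_filter, Finset.mem_Icc] at hu
        obtain ⟨⟨h1, h2⟩, hnd⟩ := hu
        beta_reduce
        rw [abs_corr_nondiv a a' n d m hn ha hnm hco u h1 (by omega) hnd]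
        rw [hF]
        beta_reduce
        rw [show u/m*m + u%m = u from by rw [mul_comm]; exact Nat.div_add_mod u m]
    rw [step1, Finset.sum_product]
    have step2 : ∀ qq ∈ Finset.range d, ∑ r ∈ Finset.Icc 1 (m-1), F (qq*m+r)
        = ∑ r ∈ Finset.Icc 1 (m-1), F r := by
      intro qq _
      refine Finset.sum_congr rfl fun r _ => ?_
      rw [hF]
      beta_reduce
      exact Fper a a' n d m hn ha hnm qq r
    rw [Finset.sum_congr rfl step2, Finset.sum_const, Finset.card_range, nsmul_eq_mul]
  -- folding the F-sum
  have hfold : ∑ r ∈ Finset.Icc 1 (m-1), F r = 2 * Sig - E := by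
    have hdisj : Disjoint (Finset.Icc 1 (m/2)) (Finset.Icc (m/2+1) (m-1)) := by
      rw [Finset.disjoint_left]
      intro x hx hx2
      simp only [Finset.mem_Icc] at hx hx2
      omega
    have hunion : Finset.Icc 1 (m-1) = Finset.Icc 1 (m/2) ∪ Finset.Icc (m/2+1) (m-1) := by
      ext x; simp only [Finset.mem_Icc, Finset.mem_union]; omega
    rw [hunion, Finset.sum_union hdisj]
    have hrefl : ∑ r ∈ Finset.Icc (m/2+1) (m-1), F r
        = ∑ r ∈ Finset.Icc 1 (m-1-(m/2)), F r := by
      refine Finset.sum_nbij' (fun r => m - r) (fun r => m - r) ?_ ?_ ?_ ?_ ?_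
      · intro r hr; simp only [Finset.mem_Icc] at hr ⊢; omega
      · intro r hr; simp only [Finset.mem_Icc] at hr ⊢; omega
      · intro r hr; simp only [Finset.mem_Icc] at hr; beta_reduce; omega
      · intro r hr; simp only [Finset.mem_Icc] at hr; beta_reduce; omega
      · intro r hr
        simp only [Finset.mem_Icc] at hr
        have hFs := Fsym a a' n d m hn ha hnm (m - r) (by omega)
        rw [show m - (m - r) = r from by omega] at hFs
        rw [hF]
        beta_reduce
        exact hFs
    rcases Nat.even_or_odd m with ⟨h, hm2⟩ | ⟨s, hms⟩
    · -- m even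
      have hm2' : m = 2*h := by omega
      have hh1 : 1 ≤ h := by omega
      have hhalf : m/2 = h := by omega
      have hrest : m-1-(m/2) = h-1 := by omega
      rw [hrefl, hrest, hhalf]
      have hSig2 : Sig = ∑ u ∈ Finset.Icc 1 h, F u := by rw [hSig, hhalf]
      rw [hSig2]
      have htop : ∑ u ∈ Finset.Icc 1 h, F u = ∑ u ∈ Finset.Icc 1 (h-1), F u + F h := by
        rw [show Finset.Icc 1 h = insert h (Finset.Icc 1 (h-1)) from by
          ext x; simp only [Finset.mem_Icc, Finset.mem_insert]; omega]
        rw [Finset.sum_insert (by simp only [Finset.mem_Icc]; omega)]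
        ring
      have hFh : F h = E := by
        rw [hF]
        beta_reduce
        rw [Fhalf a a' n d m hn ha hnm hco h hh1 hm2', hE]
      rw [htop, hFh]
      ring
    · -- m odd
      have h1 : m - 1 - m/2 = m/2 := by omega
      have hE0 : E = 0 := by rw [hE, if_neg (by omega)]
      rw [hrefl, h1, hE0, ← hSig]
      ring
  rw [← Finset.sum_filter_add_sum_filter_not (Finset.Icc 1 (n-1)) (fun u => m ∣ u)
    (fun u => ‖corr n (chu n a) (chu n a) (u:ℕ)‖ ^ 2)]
  rw [hMult, hNon, hfold]
  field_simp
  rw [hnR]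
  ring
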